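/- Let κ ∈ (0,1), N_S > 0 and N_B ≥ 0, and set a = κ(N_S + 1/2) + (1−κ)(N_B + 1/2), b = N_S + 1/2, c = √(κ·N_S(N_S+1)). Let Σ be the real symmetric 4×4 matrix with rows [a,0,c,0], [0,a,0,−c], [c,0,b,0], [0,−c,0,b]. Then Σ − (1/2)·I₄ is positive semidefinite if and only if N_B ≥ κ/(1−κ). -/

import Mathlib

/-- For `κ ∈ (0,1)`, `N_S > 0`, `N_B ≥ 0`, with
`a = κ(N_S+1/2)+(1−κ)(N_B+1/2)`, `b = N_S+1/2`, `c = √(κ N_S(N_S+1))`, the covariance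
matrix `S` with rows `[a,0,c,0],[0,a,0,−c],[c,0,b,0],[0,−c,0,b]` satisfies:
`S − (1/2)·I₄` is positive semidefinite if and only if `N_B ≥ κ/(1−κ)`. -/
theorem tmss_attenuator_classicality (κ NS NB : ℝ) (hκ : κ ∈ Set.Ioo (0 : ℝ) 1)
    (hNS : 0 < NS) (hNB : 0 ≤ NB)
    (a b c : ℝ)
    (ha : a = κ * (NS + 1/2) + (1 - κ) * (NB + 1/2))
    (hb : b = NS + 1/2)
    (hc : c = Real.sqrt (κ * NS * (NS + 1)))
    (S : Matrix (Fin 4) (Fin 4) ℝ)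
    (hS : S = !![a, 0, c, 0; 0, a, 0, -c; c, 0, b, 0; 0, -c, 0, b]) :
    (S - (1/2 : ℝ) • (1 : Matrix (Fin 4) (Fin 4) ℝ)).PosSemidef ↔ NB ≥ κ / (1 - κ) := by
  obtain ⟨hκ0, hκ1⟩ := hκ
  have hA : a - 1/2 = κ * NS + (1 - κ) * NB := by rw [ha]; ring
  have hB : b - 1/2 = NS := by rw [hb]; ring
  have hcsq : c ^ 2 = κ * NS * (NS + 1) := by
    rw [hc, Real.sq_sqrt (by positivity)]
  have hquad : ∀ x : Fin 4 → ℝ,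
      dotProduct (star x) (Matrix.mulVec (S - (1/2 : ℝ) • (1 : Matrix (Fin 4) (Fin 4) ℝ)) x) =
      (a - 1/2) * (x 0 ^ 2 + x 1 ^ 2) + (b - 1/2) * (x 2 ^ 2 + x 3 ^ 2)
        + 2 * c * (x 0 * x 2 - x 1 * x 3) := by
    intro x
    simp [hS, dotProduct, Matrix.mulVec, Fin.sum_univ_four, Matrix.sub_apply,
      Matrix.smul_apply, Matrix.one_apply, Fin.isValue]
    ring
  constructor
  · intro hpsd
    have h := hpsd.dotProduct_mulVec_nonneg ![NS, 0, -c, 0]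
    rw [hquad] at h
    simp only [Matrix.cons_val_zero, Matrix.cons_val_one, Matrix.head_cons,
      Matrix.cons_val_two, Matrix.cons_val_three, Matrix.tail_cons] at h
    have h' : 0 ≤ NS * ((a - 1/2) * NS - c ^ 2) := by nlinarith [h]
    have h2 : κ * NS * (NS + 1) ≤ (κ * NS + (1 - κ) * NB) * NS := by
      rw [← hA, ← hcsq]
      nlinarith [h']
    have h3 : κ ≤ (1 - κ) * NB := by nlinarith
    rw [ge_iff_le, div_le_iff₀ (by linarith)]
    linarith [h3]
  · intro hNBge
    have h3 : κ ≤ (1 - κ) * NB := by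
      rw [ge_iff_le, div_le_iff₀ (by linarith)] at hNBge
      linarith
    have hApos : 0 < a - 1/2 := by rw [hA]; nlinarith
    have hdet : c ^ 2 ≤ (a - 1/2) * (b - 1/2) := by
      rw [hA, hB, hcsq]; nlinarith
    refine Matrix.posSemidef_iff_dotProduct_mulVec.mpr ⟨?_, ?_⟩
    · rw [hS]
      ext i j
      fin_cases i <;> fin_cases j <;>
        simp [Matrix.conjTranspose_apply, Matrix.sub_apply, Matrix.smul_apply, Matrix.one_apply]
    · intro x
      rw [hquad]
      have key : ∀ u v : ℝ, 0 ≤ (a - 1/2) * u ^ 2 + (b - 1/2) * v ^ 2 + 2 * c * (u * v) := by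
        intro u v
        have := sq_nonneg ((a - 1/2) * u + c * v)
        have hv := sq_nonneg v
        nlinarith [mul_pos hApos hApos]
      have k1 := key (x 0) (x 2)
      have k2 := key (x 1) (-(x 3))
      nlinarith [k1, k2]
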